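/- Let k be a field, v : k → ℝ≥0 a nonarchimedean absolute value, A a commutative monoid, φ : k[A] → R a k-algebra homomorphism from the monoid algebra k[A] to a commutative k-algebra R, and w : R → ℝ≥0 a nonarchimedean seminorm with w(c·1_R) = v(c) for all c ∈ k. Then for every p ∈ ker φ, writing p = Σ_{a ∈ supp(p)} c_a·a, either the maximum of the values v(c_a)·w(φ(a)) over a ∈ supp(p) is attained for at least two distinct a ∈ supp(p), or this maximum equals 0. In other words, the map a ↦ w(φ(a)) lies in the bend locus Z(p^trop) of every p in the ideal of definition, so the Kajiwara–Payne tropicalization map trop(w) = w ∘ φ|_A indeed lands in X^trop. -/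

import Mathlib

open scoped NNReal

/-- Let `v` be a nonarchimedean absolute value on a field `k`, `A` a
commutative monoid, `φ : k[A] → R` a `k`-algebra homomorphism from the monoid
algebra, and `w : R → ℝ≥0` a nonarchimedean seminorm extending `v`.  Then for
every `p ∈ ker φ`, either the maximum of the values `v (p.coeff a) * w (φ a)` over
`a ∈ supp p` is attained at two distinct elements of the support, or this
maximum is zero.  (Hence `a ↦ w (φ a)` lies in the bend locus `Z(p^trop)` of
every `p` in the ideal of definition.) -/
theorem trop_of_seminorm_mem_bendLocus
    {k R A : Type*} [Field k] [CommRing R] [Algebra k R] [CommMonoid A]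
    (v : k → ℝ≥0) (hv0 : v 0 = 0) (hv1 : v 1 = 1)
    (hvmul : ∀ a b : k, v (a * b) = v a * v b)
    (hvadd : ∀ a b : k, v (a + b) ≤ max (v a) (v b))
    (hvabs : ∀ c : k, v c = 0 ↔ c = 0)
    (φ : MonoidAlgebra k A →ₐ[k] R)
    (w : R → ℝ≥0) (hw0 : w 0 = 0) (hw1 : w 1 = 1)
    (hwmul : ∀ a b : R, w (a * b) = w a * w b)
    (hwadd : ∀ a b : R, w (a + b) ≤ max (w a) (w b))
    (hwv : ∀ c : k, w (algebraMap k R c) = v c)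
    (p : MonoidAlgebra k A) (hp : φ p = 0) :
    (∃ a ∈ p.coeff.support, ∃ b ∈ p.coeff.support, a ≠ b ∧
        v (p.coeff a) * w (φ (MonoidAlgebra.of k A a)) =
          v (p.coeff b) * w (φ (MonoidAlgebra.of k A b)) ∧
        ∀ c ∈ p.coeff.support,
          v (p.coeff c) * w (φ (MonoidAlgebra.of k A c)) ≤
            v (p.coeff a) * w (φ (MonoidAlgebra.of k A a))) ∨
    (∀ a ∈ p.coeff.support, v (p.coeff a) * w (φ (MonoidAlgebra.of k A a)) = 0) := by
  classical
  set f : A → ℝ≥0 := fun a => v (p.coeff a) * w (φ (MonoidAlgebra.of k A a)) with hfdef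
  rcases p.coeff.support.eq_empty_or_nonempty with hs | hs
  · right; intro a ha; rw [hs] at ha; exact absurd ha (Finset.notMem_empty a)
  obtain ⟨a, ha, hmax⟩ := p.coeff.support.exists_max_image f hs
  by_cases hfa : f a = 0
  · right; intro c hc; exact le_antisymm (hfa ▸ hmax c hc) (zero_le)
  left
  -- auxiliary facts
  have hneg1 : w (-1 : R) = 1 := by
    have h2 : w (-1 : R) * w (-1 : R) = 1 := by
      rw [← hwmul]; norm_num [hw1]
    calc w (-1 : R) = NNReal.sqrt (w (-1 : R) * w (-1 : R)) :=
          (NNReal.sqrt_mul_self _).symm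
      _ = 1 := by rw [h2, NNReal.sqrt_one]
  have hneg : ∀ x : R, w (-x) = w x := fun x => by
    rw [← neg_one_mul, hwmul, hneg1, one_mul]
  have hsingle : ∀ (c : A) (x : k),
      w (φ (MonoidAlgebra.single c x)) = v x * w (φ (MonoidAlgebra.of k A c)) := by
    intro c x
    have h : (MonoidAlgebra.single c x : MonoidAlgebra k A) =
        x • MonoidAlgebra.of k A c := by
      rw [MonoidAlgebra.of_apply, MonoidAlgebra.smul_single', mul_one]
    rw [h, map_smul, Algebra.smul_def, hwmul, hwv]
  have hsum : ∀ (s : Finset A) (g : A → R) (t : ℝ≥0), 0 < t →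
      (∀ c ∈ s, w (g c) < t) → w (∑ c ∈ s, g c) < t := by
    intro s g t ht
    induction s using Finset.induction_on with
    | empty => intro _; simpa [hw0] using ht
    | insert _ _ hnotmem ih =>
        intro h
        rw [Finset.sum_insert hnotmem]
        exact lt_of_le_of_lt (hwadd _ _)
          (max_lt (h _ (Finset.mem_insert_self _ _))
            (ih fun c hc => h c (Finset.mem_insert_of_mem hc)))
  by_contra hcon
  push_neg at hcon
  have hlt : ∀ b ∈ p.coeff.support.erase a, f b < f a := by
    intro b hb
    obtain ⟨hba, hbs⟩ := Finset.mem_erase.mp hb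
    rcases lt_or_eq_of_le (hmax b hbs) with h | h
    · exact h
    · exfalso
      obtain ⟨c, hc, hcgt⟩ := hcon a ha b hbs (Ne.symm hba) h.symm
      exact absurd (hmax c hc) (not_le.mpr hcgt)
  have hdecomp : p = MonoidAlgebra.single a (p.coeff a) +
      ∑ c ∈ p.coeff.support.erase a, MonoidAlgebra.single c (p.coeff c) := by
    conv_lhs => rw [← MonoidAlgebra.sum_coeff_single p]
    rw [Finsupp.sum, ← Finset.add_sum_erase _ _ ha]
  have h0 : φ (MonoidAlgebra.single a (p.coeff a)) +
      ∑ c ∈ p.coeff.support.erase a, φ (MonoidAlgebra.single c (p.coeff c)) = 0 := by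
    rw [← map_sum, ← map_add, ← hdecomp, hp]
  have key : w (φ (MonoidAlgebra.single a (p.coeff a))) =
      w (∑ c ∈ p.coeff.support.erase a, φ (MonoidAlgebra.single c (p.coeff c))) := by
    rw [eq_neg_of_add_eq_zero_left h0, hneg]
  have hlhs : w (φ (MonoidAlgebra.single a (p.coeff a))) = f a := hsingle a (p.coeff a)
  have hrhs : w (∑ c ∈ p.coeff.support.erase a, φ (MonoidAlgebra.single c (p.coeff c))) < f a := by
    apply hsum _ _ _ (pos_iff_ne_zero.mpr hfa)
    intro c hc
    rw [hsingle c (p.coeff c)]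
    exact hlt c hc
  rw [← key, hlhs] at hrhs
  exact lt_irrefl _ hrhs
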